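/- Let M be a left Hopf module over a Hopf algebra H over a field F. The map q_M : M → M defined by q_M(m) = S(m_{[-1]}) · m_{[0]} (where ρ(m) = m_{[-1]} ⊗ m_{[0]} is the left coaction) is idempotent, and its image is contained in the coinvariants: ρ(q_M(m)) = 1_H ⊗ q_M(m) for all m ∈ M. -/

import Mathlib

open TensorProduct

set_option synthInstance.maxHeartbeats 400000
set_option maxHeartbeats 1000000

namespace HopfAux

variable {F H : Type*} [Field F] [Ring H] [HopfAlgebra F H]

local notation "Δ" => Coalgebra.comul (R := F) (A := H)
local notation "ε" => Coalgebra.counit (R := F) (A := H)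
local notation "𝒮" => HopfAlgebra.antipode (R := F) (A := H)

noncomputable section

/-- convolution product on `Hom(H, A)` -/
def conv {A : Type*} [Ring A] [Algebra F A] (f g : H →ₗ[F] A) : H →ₗ[F] A :=
  LinearMap.mul' F A ∘ₗ TensorProduct.map f g ∘ₗ Δ

def convUnit (A : Type*) [Ring A] [Algebra F A] : H →ₗ[F] A :=
  Algebra.linearMap F A ∘ₗ ε

variable {A : Type*} [Ring A] [Algebra F A]

lemma conv_apply (f g : H →ₗ[F] A) (h : H) :
    conv f g h = LinearMap.mul' F A (TensorProduct.map f g (Δ h)) := rfl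

lemma conv_unit_left (f : H →ₗ[F] A) : conv (convUnit A) f = f := by
  ext h
  have key : ∀ t : H ⊗[F] H,
      LinearMap.mul' F A (TensorProduct.map (convUnit A (H := H)) f t) =
        f ((TensorProduct.lid F H) (TensorProduct.map ε LinearMap.id t)) := by
    intro t
    induction t using TensorProduct.induction_on with
    | zero => simp
    | tmul a b =>
        simp only [convUnit, TensorProduct.map_tmul, LinearMap.coe_comp, Function.comp_apply,
          Algebra.linearMap_apply, LinearMap.mul'_apply, LinearMap.id_coe, id_eq,
          TensorProduct.lid_tmul, ← Algebra.smul_def, map_smul]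
    | add x y hx hy => simp [map_add, hx, hy]
  have h2 : TensorProduct.map ε LinearMap.id (Δ h) = (1 : F) ⊗ₜ[F] h := by
    have := Coalgebra.rTensor_counit_comul (R := F) h
    simpa [LinearMap.rTensor] using this
  simp [conv_apply, key, h2]

lemma conv_unit_right (f : H →ₗ[F] A) : conv f (convUnit A) = f := by
  ext h
  have key : ∀ t : H ⊗[F] H,
      LinearMap.mul' F A (TensorProduct.map f (convUnit A (H := H)) t) =
        f ((TensorProduct.rid F H) (TensorProduct.map LinearMap.id ε t)) := by
    intro t
    induction t using TensorProduct.induction_on with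
    | zero => simp
    | tmul a b =>
        simp only [convUnit, TensorProduct.map_tmul, LinearMap.coe_comp, Function.comp_apply,
          Algebra.linearMap_apply, LinearMap.mul'_apply, LinearMap.id_coe, id_eq,
          TensorProduct.rid_tmul, ← Algebra.commutes, ← Algebra.smul_def, map_smul]
    | add x y hx hy => simp [map_add, hx, hy]
  have h2 : TensorProduct.map LinearMap.id ε (Δ h) = h ⊗ₜ[F] (1 : F) := by
    have := Coalgebra.lTensor_counit_comul (R := F) h
    simpa [LinearMap.lTensor] using this
  simp [conv_apply, key, h2]

lemma conv_assoc (f g k : H →ₗ[F] A) : conv (conv f g) k = conv f (conv g k) := by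
  ext h
  have key : ∀ u : (H ⊗[F] H) ⊗[F] H,
      LinearMap.mul' F A (TensorProduct.map (LinearMap.mul' F A ∘ₗ TensorProduct.map f g) k u) =
        LinearMap.mul' F A (TensorProduct.map f (LinearMap.mul' F A ∘ₗ TensorProduct.map g k)
          ((TensorProduct.assoc F H H H) u)) := by
    intro u
    induction u using TensorProduct.induction_on with
    | zero => simp only [map_zero, LinearEquiv.map_zero]
    | tmul x c =>
        induction x using TensorProduct.induction_on with
        | zero => simp
        | tmul a b => simp [mul_assoc]
        | add x y hx hy =>
            simp only [add_tmul, map_add, hx, hy]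
    | add x y hx hy => simp [map_add, hx, hy]
  have lhs : conv (conv f g) k h =
      LinearMap.mul' F A (TensorProduct.map (LinearMap.mul' F A ∘ₗ TensorProduct.map f g) k
        (TensorProduct.map Δ LinearMap.id (Δ h))) := by
    have e1 : TensorProduct.map (conv f g) k =
        TensorProduct.map (LinearMap.mul' F A ∘ₗ TensorProduct.map f g) k ∘ₗ
          TensorProduct.map Δ LinearMap.id := by
      rw [← TensorProduct.map_comp, LinearMap.comp_id]
      rfl
    rw [conv_apply, e1]
    rfl
  have rhs : conv f (conv g k) h =
      LinearMap.mul' F A (TensorProduct.map f (LinearMap.mul' F A ∘ₗ TensorProduct.map g k)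
        (TensorProduct.map LinearMap.id Δ (Δ h))) := by
    have e1 : TensorProduct.map f (conv g k) =
        TensorProduct.map f (LinearMap.mul' F A ∘ₗ TensorProduct.map g k) ∘ₗ
          TensorProduct.map LinearMap.id Δ := by
      rw [← TensorProduct.map_comp, LinearMap.comp_id]
      rfl
    rw [conv_apply, e1]
    rfl
  rw [lhs, rhs, key]
  congr 1
  congr 1
  have := Coalgebra.coassoc_apply (R := F) (A := H) h
  simpa [LinearMap.rTensor, LinearMap.lTensor] using this

lemma conv_eq_of_inv (a b c : H →ₗ[F] A) (h1 : conv a b = convUnit A)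
    (h2 : conv b c = convUnit A) : a = c := by
  calc a = conv a (convUnit A) := (conv_unit_right a).symm
    _ = conv a (conv b c) := by rw [h2]
    _ = conv (conv a b) c := (conv_assoc a b c).symm
    _ = conv (convUnit A) c := by rw [h1]
    _ = c := conv_unit_left c


lemma antipode_one : 𝒮 (1 : H) = 1 := by
  have h := HopfAlgebra.mul_antipode_rTensor_comul_apply (R := F) (A := H) (1 : H)
  rw [Bialgebra.comul_one] at h
  simpa [Algebra.TensorProduct.one_def] using h

/-- the inverse-side of the antipode/comultiplication anti-homomorphism -/
def G : H →ₗ[F] H ⊗[F] H :=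
  (TensorProduct.comm F H H).toLinearMap ∘ₗ TensorProduct.map 𝒮 𝒮 ∘ₗ Δ

/-- the half-collapse map `b ⊗ c ↦ S(b) c₁ ⊗ c₂`. -/
def chi : H ⊗[F] H →ₗ[F] H ⊗[F] H :=
  TensorProduct.map (LinearMap.mul' F H ∘ₗ TensorProduct.map 𝒮 LinearMap.id) LinearMap.id ∘ₗ
    (TensorProduct.assoc F H H H).symm.toLinearMap ∘ₗ
      TensorProduct.map LinearMap.id Δ

lemma coassoc' (x : H) :
    TensorProduct.map LinearMap.id Δ (Δ x) =
      (TensorProduct.assoc F H H H) (TensorProduct.map Δ LinearMap.id (Δ x)) := by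
  have := Coalgebra.coassoc_apply (R := F) (A := H) x
  simpa [LinearMap.rTensor, LinearMap.lTensor] using this.symm

lemma chi_comul (x : H) : chi (Δ x) = (1 : H) ⊗ₜ[F] x := by
  have e0 : chi (Δ x) =
      TensorProduct.map (LinearMap.mul' F H ∘ₗ TensorProduct.map 𝒮 LinearMap.id) LinearMap.id
        ((TensorProduct.assoc F H H H).symm
          (TensorProduct.map LinearMap.id Δ (Δ x))) := rfl
  rw [e0, coassoc' x, LinearEquiv.symm_apply_apply]
  have key : ∀ u : H ⊗[F] H,
      TensorProduct.map (LinearMap.mul' F H ∘ₗ TensorProduct.map 𝒮 LinearMap.id) LinearMap.id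
        (TensorProduct.map Δ LinearMap.id u) =
      TensorProduct.map (Algebra.linearMap F H) LinearMap.id
        (TensorProduct.map ε LinearMap.id u) := by
    intro u
    induction u using TensorProduct.induction_on with
    | zero => simp
    | tmul a b =>
        have h := HopfAlgebra.mul_antipode_rTensor_comul_apply (R := F) (A := H) a
        simp only [TensorProduct.map_tmul, LinearMap.coe_comp, Function.comp_apply,
          LinearMap.id_coe, id_eq, Algebra.linearMap_apply]
        rw [show TensorProduct.map 𝒮 LinearMap.id (Δ a) = LinearMap.rTensor H 𝒮 (Δ a) from rfl, h]
    | add u v hu hv => simp [map_add, hu, hv]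
  rw [key]
  have h2 : TensorProduct.map ε LinearMap.id (Δ x) = (1 : F) ⊗ₜ[F] x := by
    have := Coalgebra.rTensor_counit_comul (R := F) x
    simpa [LinearMap.rTensor] using this
  rw [h2]
  simp

lemma conv_comul : conv Δ (Δ ∘ₗ 𝒮) = convUnit (H ⊗[F] H) := by
  ext h
  have key : ∀ t : H ⊗[F] H,
      LinearMap.mul' F (H ⊗[F] H) (TensorProduct.map Δ (Δ ∘ₗ 𝒮) t) =
        Δ (LinearMap.mul' F H (TensorProduct.map LinearMap.id 𝒮 t)) := by
    intro t
    induction t using TensorProduct.induction_on with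
    | zero => simp
    | tmul a b => simp [Bialgebra.comul_mul]
    | add x y hx hy => simp [map_add, hx, hy]
  have h2 : LinearMap.mul' F H (TensorProduct.map LinearMap.id 𝒮 (Δ h)) =
      algebraMap F H (ε h) := by
    have := HopfAlgebra.mul_antipode_lTensor_comul_apply (R := F) (A := H) h
    simpa [LinearMap.lTensor] using this
  rw [conv_apply, key, h2]
  simp [convUnit, Algebra.algebraMap_eq_smul_one]

lemma conv_G : conv (G (F := F) (H := H)) Δ = convUnit (H ⊗[F] H) := by
  ext h
  have e1 : TensorProduct.map (G (F := F) (H := H)) Δ =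
      TensorProduct.map ((TensorProduct.comm F H H).toLinearMap ∘ₗ TensorProduct.map 𝒮 𝒮) Δ ∘ₗ
        TensorProduct.map Δ LinearMap.id := by
    rw [← TensorProduct.map_comp, LinearMap.comp_id]
    rfl
  have e2 : TensorProduct.map Δ LinearMap.id (Δ h) =
      (TensorProduct.assoc F H H H).symm (TensorProduct.map LinearMap.id Δ (Δ h)) := by
    rw [coassoc' h, LinearEquiv.symm_apply_apply]
  have aux2 : ∀ v : H ⊗[F] (H ⊗[F] H),
      LinearMap.mul' F (H ⊗[F] H)
        (TensorProduct.map ((TensorProduct.comm F H H).toLinearMap ∘ₗ TensorProduct.map 𝒮 𝒮) Δ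
          ((TensorProduct.assoc F H H H).symm v)) =
      LinearMap.mul' F (H ⊗[F] H)
        (TensorProduct.map ((TensorProduct.mk F H H 1) ∘ₗ 𝒮) chi v) := by
    intro v
    induction v using TensorProduct.induction_on with
    | zero => simp
    | tmul a w =>
        induction w using TensorProduct.induction_on with
        | zero => simp
        | tmul b c =>
            have inner : ∀ w' : H ⊗[F] H,
                ((𝒮 b) ⊗ₜ[F] (𝒮 a)) * w' =
                  ((1 : H) ⊗ₜ[F] (𝒮 a)) *
                    (TensorProduct.map (LinearMap.mul' F H ∘ₗ TensorProduct.map 𝒮 LinearMap.id)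
                      LinearMap.id ((TensorProduct.assoc F H H H).symm (b ⊗ₜ[F] w'))) := by
              intro w'
              induction w' using TensorProduct.induction_on with
              | zero => simp
              | tmul x y =>
                  simp [Algebra.TensorProduct.tmul_mul_tmul]
              | add u v hu hv =>
                  simp only [mul_add, TensorProduct.tmul_add, map_add, hu, hv]
            have echi : chi (b ⊗ₜ[F] c) =
                TensorProduct.map (LinearMap.mul' F H ∘ₗ TensorProduct.map 𝒮 LinearMap.id)
                  LinearMap.id ((TensorProduct.assoc F H H H).symm (b ⊗ₜ[F] (Δ c))) := rfl
            simp only [TensorProduct.assoc_symm_tmul, TensorProduct.map_tmul,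
              LinearMap.coe_comp, Function.comp_apply, TensorProduct.comm_tmul,
              LinearMap.mul'_apply, TensorProduct.mk_apply, echi]
            exact inner (Δ c)
        | add u v hu hv =>
            simp only [TensorProduct.tmul_add, map_add, hu, hv]
    | add u v hu hv => simp [map_add, hu, hv]
  have aux3 : ∀ t : H ⊗[F] H,
      LinearMap.mul' F (H ⊗[F] H)
        (TensorProduct.map ((TensorProduct.mk F H H 1) ∘ₗ 𝒮) chi
          (TensorProduct.map LinearMap.id Δ t)) =
      (1 : H) ⊗ₜ[F] (LinearMap.mul' F H (TensorProduct.map 𝒮 LinearMap.id t)) := by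
    intro t
    induction t using TensorProduct.induction_on with
    | zero => simp
    | tmul a b =>
        simp only [TensorProduct.map_tmul, LinearMap.coe_comp, Function.comp_apply,
          LinearMap.id_coe, id_eq, TensorProduct.mk_apply, chi_comul,
          Algebra.TensorProduct.tmul_mul_tmul, one_mul, LinearMap.mul'_apply]
    | add u v hu hv => simp [map_add, hu, hv, TensorProduct.tmul_add]
  rw [conv_apply, e1]
  simp only [LinearMap.coe_comp, Function.comp_apply]
  rw [e2, aux2, aux3]
  have h3 : LinearMap.mul' F H (TensorProduct.map 𝒮 LinearMap.id (Δ h)) =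
      algebraMap F H (ε h) := by
    have := HopfAlgebra.mul_antipode_rTensor_comul_apply (R := F) (A := H) h
    simpa [LinearMap.rTensor] using this
  rw [h3]
  simp only [convUnit, LinearMap.coe_comp, Function.comp_apply, Algebra.linearMap_apply,
    Algebra.TensorProduct.algebraMap_apply]
  rw [Algebra.algebraMap_eq_smul_one (A := H)]
  exact (TensorProduct.smul_tmul (R := F) (R' := F) (Coalgebra.counit (R := F) h) (1 : H) (1 : H)).symm

theorem comul_antipode :
    Δ ∘ₗ 𝒮 = (TensorProduct.comm F H H).toLinearMap ∘ₗ TensorProduct.map 𝒮 𝒮 ∘ₗ Δ :=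
  (conv_eq_of_inv (G (F := F) (H := H)) Δ (Δ ∘ₗ 𝒮) conv_G conv_comul).symm

end

end HopfAux

/-- For a left Hopf module `M` over a Hopf algebra `H`, the map
`q_M(m) = S(m₍₋₁₎) · m₍₀₎` is idempotent and its image consists of
coinvariants: `ρ (q_M m) = 1 ⊗ q_M m`. -/
theorem hopf_module_projection (F H M : Type*) [Field F] [Ring H]
    [HopfAlgebra F H] [AddCommGroup M] [Module F M]
    (act : H →ₗ[F] M →ₗ[F] M)
    (hact_one : act 1 = LinearMap.id)
    (hact_mul : ∀ h h' : H, act (h * h') = act h ∘ₗ act h')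
    (ρ : M →ₗ[F] H ⊗[F] M)
    (hcounit : ∀ m : M,
      (TensorProduct.lid F M)
        (TensorProduct.map (Coalgebra.counit (R := F)) LinearMap.id (ρ m)) = m)
    (hcoassoc : ∀ m : M,
      (TensorProduct.assoc F H H M)
        (TensorProduct.map (Coalgebra.comul (R := F)) LinearMap.id (ρ m)) =
      TensorProduct.map LinearMap.id ρ (ρ m))
    (hhopf : ρ ∘ₗ TensorProduct.lift act =
      TensorProduct.map (LinearMap.mul' F H) (TensorProduct.lift act) ∘ₗ
        (TensorProduct.tensorTensorTensorComm F H H H M).toLinearMap ∘ₗ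
          TensorProduct.map (Coalgebra.comul (R := F)) ρ) :
    (TensorProduct.lift act ∘ₗ
        TensorProduct.map (HopfAlgebra.antipode (R := F)) LinearMap.id ∘ₗ ρ) ∘ₗ
      (TensorProduct.lift act ∘ₗ
        TensorProduct.map (HopfAlgebra.antipode (R := F)) LinearMap.id ∘ₗ ρ) =
      TensorProduct.lift act ∘ₗ
        TensorProduct.map (HopfAlgebra.antipode (R := F)) LinearMap.id ∘ₗ ρ ∧
    ρ ∘ₗ (TensorProduct.lift act ∘ₗ
        TensorProduct.map (HopfAlgebra.antipode (R := F)) LinearMap.id ∘ₗ ρ) =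
      TensorProduct.mk F H M 1 ∘ₗ
        (TensorProduct.lift act ∘ₗ
          TensorProduct.map (HopfAlgebra.antipode (R := F)) LinearMap.id ∘ₗ ρ) := by
  have Sm := HopfAlgebra.antipode (R := F) (A := H)
  -- key1 : the collapse `χ_M (ρ n) = 1 ⊗ n`
  have key1 : ∀ n : M,
      TensorProduct.map
          (LinearMap.mul' F H ∘ₗ
            TensorProduct.map (HopfAlgebra.antipode (R := F) (A := H)) LinearMap.id)
          LinearMap.id
        ((TensorProduct.assoc F H H M).symm
          (TensorProduct.map LinearMap.id ρ (ρ n))) = (1 : H) ⊗ₜ[F] n := by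
    intro n
    have e1 : (TensorProduct.assoc F H H M).symm (TensorProduct.map LinearMap.id ρ (ρ n)) =
        TensorProduct.map (Coalgebra.comul (R := F)) LinearMap.id (ρ n) := by
      rw [← hcoassoc n, LinearEquiv.symm_apply_apply]
    rw [e1]
    have step : ∀ t : H ⊗[F] M,
        TensorProduct.map
            (LinearMap.mul' F H ∘ₗ
              TensorProduct.map (HopfAlgebra.antipode (R := F) (A := H)) LinearMap.id)
            LinearMap.id
          (TensorProduct.map (Coalgebra.comul (R := F)) LinearMap.id t) =
        TensorProduct.map (Algebra.linearMap F H ∘ₗ Coalgebra.counit (R := F))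
          LinearMap.id t := by
      intro t
      induction t using TensorProduct.induction_on with
      | zero => simp
      | tmul a p =>
          have h := HopfAlgebra.mul_antipode_rTensor_comul_apply (R := F) (A := H) a
          simp only [TensorProduct.map_tmul, LinearMap.coe_comp, Function.comp_apply,
            LinearMap.id_coe, id_eq, Algebra.linearMap_apply]
          rw [show TensorProduct.map (HopfAlgebra.antipode (R := F) (A := H)) LinearMap.id
            (Coalgebra.comul a) =
            LinearMap.rTensor H (HopfAlgebra.antipode (R := F) (A := H))
              (Coalgebra.comul a) from rfl, h]
      | add u v hu hv => simp [map_add, hu, hv]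
    rw [step]
    have step2 : ∀ s : H ⊗[F] M,
        TensorProduct.map (Algebra.linearMap F H ∘ₗ Coalgebra.counit (R := F))
          LinearMap.id s =
        (TensorProduct.mk F H M 1)
          ((TensorProduct.lid F M)
            (TensorProduct.map (Coalgebra.counit (R := F)) LinearMap.id s)) := by
      intro s
      induction s using TensorProduct.induction_on with
      | zero => simp
      | tmul a p =>
          simp only [TensorProduct.map_tmul, LinearMap.coe_comp, Function.comp_apply,
            LinearMap.id_coe, id_eq, Algebra.linearMap_apply, TensorProduct.lid_tmul,
            TensorProduct.mk_apply, Algebra.algebraMap_eq_smul_one]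
          exact TensorProduct.smul_tmul _ _ _
      | add u v hu hv => simp [map_add, hu, hv, TensorProduct.tmul_add]
    rw [step2, hcounit n]
    rfl
  -- key2 : the structured form of the big composite on pure tensors
  have key2 : ∀ (h : H) (t : H ⊗[F] M),
      TensorProduct.map (LinearMap.mul' F H) (TensorProduct.lift act)
        ((TensorProduct.tensorTensorTensorComm F H H H M)
          (TensorProduct.map
            ((TensorProduct.comm F H H).toLinearMap ∘ₗ
              TensorProduct.map (HopfAlgebra.antipode (R := F) (A := H))
                (HopfAlgebra.antipode (R := F) (A := H))) ρ
            ((TensorProduct.assoc F H H M).symm (h ⊗ₜ[F] t)))) =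
      TensorProduct.map LinearMap.id (act (HopfAlgebra.antipode (R := F) (A := H) h))
        (TensorProduct.map
          (LinearMap.mul' F H ∘ₗ
            TensorProduct.map (HopfAlgebra.antipode (R := F) (A := H)) LinearMap.id)
          LinearMap.id
          ((TensorProduct.assoc F H H M).symm (TensorProduct.map LinearMap.id ρ t))) := by
    intro h t
    induction t using TensorProduct.induction_on with
    | zero => simp
    | tmul c p =>
        have inner : ∀ w : H ⊗[F] M,
            TensorProduct.map (LinearMap.mul' F H) (TensorProduct.lift act)
              ((TensorProduct.tensorTensorTensorComm F H H H M)
                (((HopfAlgebra.antipode (R := F) (A := H) c) ⊗ₜ[F]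
                  (HopfAlgebra.antipode (R := F) (A := H) h)) ⊗ₜ[F] w)) =
            TensorProduct.map LinearMap.id (act (HopfAlgebra.antipode (R := F) (A := H) h))
              (TensorProduct.map
                (LinearMap.mul' F H ∘ₗ
                  TensorProduct.map (HopfAlgebra.antipode (R := F) (A := H)) LinearMap.id)
                LinearMap.id
                ((TensorProduct.assoc F H H M).symm (c ⊗ₜ[F] w))) := by
          intro w
          induction w using TensorProduct.induction_on with
          | zero => simp
          | tmul d u =>
              simp [TensorProduct.tensorTensorTensorComm_tmul]
          | add u v hu hv =>
              simp only [TensorProduct.tmul_add, map_add, hu, hv]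
        simp only [TensorProduct.assoc_symm_tmul, TensorProduct.map_tmul,
          LinearMap.coe_comp, Function.comp_apply, TensorProduct.comm_tmul,
          LinearMap.id_coe, id_eq]
        exact inner (ρ p)
    | add u v hu hv =>
        simp only [TensorProduct.tmul_add, map_add, hu, hv]
  -- the composite linear-map identity
  have main : ∀ m : M,
      ρ (TensorProduct.lift act
        (TensorProduct.map (HopfAlgebra.antipode (R := F) (A := H)) LinearMap.id (ρ m))) =
      (1 : H) ⊗ₜ[F] (TensorProduct.lift act
        (TensorProduct.map (HopfAlgebra.antipode (R := F) (A := H)) LinearMap.id (ρ m))) := by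
    intro m
    have e1 := LinearMap.congr_fun hhopf
      (TensorProduct.map (HopfAlgebra.antipode (R := F) (A := H)) LinearMap.id (ρ m))
    simp only [LinearMap.coe_comp, Function.comp_apply, LinearEquiv.coe_coe] at e1
    rw [e1]
    have e2 : TensorProduct.map (Coalgebra.comul (R := F)) ρ
        (TensorProduct.map (HopfAlgebra.antipode (R := F) (A := H)) LinearMap.id (ρ m)) =
        TensorProduct.map
          ((Coalgebra.comul (R := F)) ∘ₗ (HopfAlgebra.antipode (R := F) (A := H))) ρ (ρ m) := by
      exact (LinearMap.congr_fun (TensorProduct.map_comp (f₂ := Coalgebra.comul (R := F))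
        (f₁ := HopfAlgebra.antipode (R := F) (A := H)) (g₂ := ρ) (g₁ := LinearMap.id)) (ρ m)).symm
    rw [e2, HopfAux.comul_antipode (F := F) (H := H)]
    have e3 : TensorProduct.map
        ((TensorProduct.comm F H H).toLinearMap ∘ₗ
          TensorProduct.map (HopfAlgebra.antipode (R := F) (A := H))
            (HopfAlgebra.antipode (R := F) (A := H)) ∘ₗ (Coalgebra.comul (R := F))) ρ (ρ m) =
        TensorProduct.map
          ((TensorProduct.comm F H H).toLinearMap ∘ₗ
            TensorProduct.map (HopfAlgebra.antipode (R := F) (A := H))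
              (HopfAlgebra.antipode (R := F) (A := H))) ρ
          (TensorProduct.map (Coalgebra.comul (R := F)) LinearMap.id (ρ m)) := by
      exact LinearMap.congr_fun (TensorProduct.map_comp
        (f₂ := (TensorProduct.comm F H H).toLinearMap ∘ₗ
          TensorProduct.map (HopfAlgebra.antipode (R := F) (A := H))
            (HopfAlgebra.antipode (R := F) (A := H))) (f₁ := Coalgebra.comul (R := F))
        (g₂ := ρ) (g₁ := LinearMap.id)) (ρ m)
    rw [e3]
    have e4 : TensorProduct.map (Coalgebra.comul (R := F)) LinearMap.id (ρ m) =
        (TensorProduct.assoc F H H M).symm (TensorProduct.map LinearMap.id ρ (ρ m)) := by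
      rw [← hcoassoc m, LinearEquiv.symm_apply_apply]
    rw [e4]
    -- now use linearity to apply key2 to the general tensor `ρ m`
    have efin : ∀ x : H ⊗[F] M,
        TensorProduct.map (LinearMap.mul' F H) (TensorProduct.lift act)
          ((TensorProduct.tensorTensorTensorComm F H H H M)
            (TensorProduct.map
              ((TensorProduct.comm F H H).toLinearMap ∘ₗ
                TensorProduct.map (HopfAlgebra.antipode (R := F) (A := H))
                  (HopfAlgebra.antipode (R := F) (A := H))) ρ
              ((TensorProduct.assoc F H H M).symm
                (TensorProduct.map LinearMap.id ρ x)))) =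
        (1 : H) ⊗ₜ[F] (TensorProduct.lift act
          (TensorProduct.map (HopfAlgebra.antipode (R := F) (A := H)) LinearMap.id x)) := by
      intro x
      induction x using TensorProduct.induction_on with
      | zero => simp
      | tmul h n =>
          have e5 : TensorProduct.map LinearMap.id ρ (h ⊗ₜ[F] n) = h ⊗ₜ[F] (ρ n) := by
            simp
          rw [e5, key2 h (ρ n), key1 n]
          simp
      | add u v hu hv =>
          simp only [TensorProduct.tmul_add, map_add, hu, hv]
    exact efin (ρ m)
  constructor
  · -- idempotency, using `main` plus `S 1 = 1` and `act 1 = id`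
    apply LinearMap.ext
    intro m
    simp only [LinearMap.coe_comp, Function.comp_apply]
    rw [main m]
    simp only [TensorProduct.map_tmul, LinearMap.id_coe, id_eq,
      HopfAux.antipode_one (F := F) (H := H), TensorProduct.lift.tmul, hact_one,
      LinearMap.id_apply]
  · apply LinearMap.ext
    intro m
    simp only [LinearMap.coe_comp, Function.comp_apply, TensorProduct.mk_apply]
    exact main m
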